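/- Let a₁, a₂, a₃, a₄ ∈ ℂ with a₁ + a₂ + a₃ + a₄ = 2, let μ ∈ ℂ ∖ {0}, and let U ⊆ ℂ ∖ {0, μ} be a connected open set. Let Σ be an antisymmetric complex 4×4 matrix and let Π : U → ℂ⁴ be a map whose four components are holomorphic on U and each satisfy the hypergeometric Picard–Fuchs equation θ⁴y = μ⁻¹·z·(θ + a₁)(θ + a₂)(θ + a₃)(θ + a₄)y, where θ = z·d/dz. Assume that Π(z)ᵀ Σ Π^{(k)}(z) = 0 for all z ∈ U and for k = 0, 1, 2 (ordinary derivatives with respect to z). Then the function z ↦ z³·(1 − z/μ)·Π(z)ᵀ Σ Π'''(z) is constant on U. -/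

import Mathlib

open Complex

/-- The logarithmic derivative operator `θ = z·d/dz`. -/
noncomputable def logDerivOp (f : ℂ → ℂ) : ℂ → ℂ := fun z => z * deriv f z

/-- The shifted operator `θ + a`. -/
noncomputable def logDerivOpShift (a : ℂ) (f : ℂ → ℂ) : ℂ → ℂ :=
  fun z => z * deriv f z + a * f z

/-- For the hypergeometric Picard–Fuchs operator
`θ⁴ − μ⁻¹ z (θ+a₁)(θ+a₂)(θ+a₃)(θ+a₄)` with `a₁+a₂+a₃+a₄ = 2`, and `Π : U → ℂ⁴` a vector of
holomorphic solutions on a connected open `U ⊆ ℂ ∖ {0, μ}` satisfying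
`Π(z)ᵀ Σ Π^{(k)}(z) = 0` for `k = 0, 1, 2` (with `Σ` antisymmetric), the function
`z ↦ z³·(1 − z/μ)·Π(z)ᵀ Σ Π'''(z)` is constant on `U`. -/
theorem yukawa_coupling_constant
    (a₁ a₂ a₃ a₄ μ : ℂ) (hsum : a₁ + a₂ + a₃ + a₄ = 2) (hμ : μ ≠ 0)
    (U : Set ℂ) (hUopen : IsOpen U) (hUconn : IsConnected U)
    (hU0 : (0 : ℂ) ∉ U) (hUμ : μ ∉ U)
    (S : Matrix (Fin 4) (Fin 4) ℂ) (hS : S.transpose = -S)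
    (P : ℂ → Fin 4 → ℂ)
    (hP : ∀ i, DifferentiableOn ℂ (fun z => P z i) U)
    (hODE : ∀ i, ∀ z ∈ U,
      logDerivOp (logDerivOp (logDerivOp (logDerivOp (fun w => P w i)))) z
        = μ⁻¹ * z *
            logDerivOpShift a₁ (logDerivOpShift a₂ (logDerivOpShift a₃
              (logDerivOpShift a₄ (fun w => P w i)))) z)
    (hPair : ∀ k : ℕ, k ≤ 2 → ∀ z ∈ U,
      ∑ i, ∑ j, P z i * S i j * iteratedDeriv k (fun w => P w j) z = 0) :
    ∃ c : ℂ, ∀ z ∈ U,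
      z ^ 3 * (1 - z / μ) *
        ∑ i, ∑ j, P z i * S i j * iteratedDeriv 3 (fun w => P w j) z = c := by
  classical
  set g : Fin 4 → ℕ → ℂ → ℂ := fun i k => deriv^[k] (fun w => P w i) with hg
  have hA : ∀ i k, AnalyticOnNhd ℂ (g i k) U := fun i k =>
    ((hP i).analyticOnNhd hUopen).iterated_deriv k
  have hHD : ∀ i k, ∀ z ∈ U, HasDerivAt (g i k) (g i (k + 1) z) z := by
    intro i k z hz
    have h1 : DifferentiableAt ℂ (g i k) z := ((hA i k) z hz).differentiableAt
    have h2 : g i (k + 1) = deriv (g i k) := by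
      simp only [hg]
      exact Function.iterate_succ_apply' deriv k _
    rw [h2]
    exact h1.hasDerivAt
  have dcongr : ∀ (F G : ℂ → ℂ), (∀ w ∈ U, F w = G w) → ∀ z ∈ U, deriv F z = deriv G z := by
    intro F G h z hz
    exact Filter.EventuallyEq.deriv_eq (Filter.eventuallyEq_of_mem (hUopen.mem_nhds hz) h)
  -- derivative of a canonical combination
  have hDer : ∀ (i : Fin 4) (c0 c1 c2 c3 c4 : ℂ), ∀ z ∈ U,
      deriv (fun w => c0 * g i 0 w + c1 * w * g i 1 w + c2 * w ^ 2 * g i 2 w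
        + c3 * w ^ 3 * g i 3 w + c4 * w ^ 4 * g i 4 w) z
      = c0 * g i 1 z + c1 * (g i 1 z + z * g i 2 z)
        + c2 * (2 * z * g i 2 z + z ^ 2 * g i 3 z)
        + c3 * (3 * z ^ 2 * g i 3 z + z ^ 3 * g i 4 z)
        + c4 * (4 * z ^ 3 * g i 4 z + z ^ 4 * g i 5 z) := by
    intro i c0 c1 c2 c3 c4 z hz
    have H : HasDerivAt (fun w => c0 * g i 0 w + c1 * w * g i 1 w + c2 * w ^ 2 * g i 2 w
        + c3 * w ^ 3 * g i 3 w + c4 * w ^ 4 * g i 4 w)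
        (c0 * g i 1 z + c1 * (g i 1 z + z * g i 2 z)
        + c2 * (2 * z * g i 2 z + z ^ 2 * g i 3 z)
        + c3 * (3 * z ^ 2 * g i 3 z + z ^ 3 * g i 4 z)
        + c4 * (4 * z ^ 3 * g i 4 z + z ^ 4 * g i 5 z)) z := by
      have h0 := (hHD i 0 z hz).const_mul c0
      have h1 := ((hasDerivAt_id z).const_mul c1).mul (hHD i 1 z hz)
      have h2 := ((hasDerivAt_pow 2 z).const_mul c2).mul (hHD i 2 z hz)
      have h3 := ((hasDerivAt_pow 3 z).const_mul c3).mul (hHD i 3 z hz)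
      have h4 := ((hasDerivAt_pow 4 z).const_mul c4).mul (hHD i 4 z hz)
      have H0 := (((h0.add h1).add h2).add h3).add h4
      refine H0.congr_deriv ?_
      simp only [id_eq]
      push_cast
      ring
    exact H.deriv
  -- LHS expansion of θ⁴
  have hθ1val : ∀ i, ∀ w : ℂ, logDerivOp (fun w => P w i) w
      = 0 * g i 0 w + 1 * w * g i 1 w + 0 * w ^ 2 * g i 2 w
        + 0 * w ^ 3 * g i 3 w + 0 * w ^ 4 * g i 4 w := by
    intro i w
    show w * deriv (fun w => P w i) w = _
    have h1 : g i 1 w = deriv (fun w => P w i) w := by simp [hg]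
    rw [← h1]; ring
  have hθ2val : ∀ i, ∀ w ∈ U, logDerivOp (logDerivOp (fun w => P w i)) w
      = 0 * g i 0 w + 1 * w * g i 1 w + 1 * w ^ 2 * g i 2 w
        + 0 * w ^ 3 * g i 3 w + 0 * w ^ 4 * g i 4 w := by
    intro i w hw
    show w * deriv (logDerivOp (fun w => P w i)) w = _
    rw [dcongr _ _ (fun u _ => hθ1val i u) w hw, hDer i 0 1 0 0 0 w hw]; ring
  have hθ3val : ∀ i, ∀ w ∈ U, logDerivOp (logDerivOp (logDerivOp (fun w => P w i))) w
      = 0 * g i 0 w + 1 * w * g i 1 w + 3 * w ^ 2 * g i 2 w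
        + 1 * w ^ 3 * g i 3 w + 0 * w ^ 4 * g i 4 w := by
    intro i w hw
    show w * deriv (logDerivOp (logDerivOp (fun w => P w i))) w = _
    rw [dcongr _ _ (hθ2val i) w hw, hDer i 0 1 1 0 0 w hw]; ring
  have hθ4val : ∀ i, ∀ z ∈ U,
      logDerivOp (logDerivOp (logDerivOp (logDerivOp (fun w => P w i)))) z
      = z * g i 1 z + 7 * z ^ 2 * g i 2 z + 6 * z ^ 3 * g i 3 z + z ^ 4 * g i 4 z := by
    intro i z hz
    show z * deriv (logDerivOp (logDerivOp (logDerivOp (fun w => P w i)))) z = _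
    rw [dcongr _ _ (hθ3val i) z hz, hDer i 0 1 3 1 0 z hz]; ring
  -- RHS expansion of the shifted operators
  have hs1val : ∀ i, ∀ w : ℂ, logDerivOpShift a₄ (fun w => P w i) w
      = a₄ * g i 0 w + 1 * w * g i 1 w + 0 * w ^ 2 * g i 2 w
        + 0 * w ^ 3 * g i 3 w + 0 * w ^ 4 * g i 4 w := by
    intro i w
    show w * deriv (fun w => P w i) w + a₄ * P w i = _
    have h1 : g i 1 w = deriv (fun w => P w i) w := by simp [hg]
    have h0 : g i 0 w = P w i := by simp [hg]
    rw [← h1, ← h0]; ring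
  have hs2val : ∀ i, ∀ w ∈ U,
      logDerivOpShift a₃ (logDerivOpShift a₄ (fun w => P w i)) w
      = (a₃ * a₄) * g i 0 w + (1 + a₃ + a₄) * w * g i 1 w + 1 * w ^ 2 * g i 2 w
        + 0 * w ^ 3 * g i 3 w + 0 * w ^ 4 * g i 4 w := by
    intro i w hw
    show w * deriv (logDerivOpShift a₄ (fun w => P w i)) w
      + a₃ * logDerivOpShift a₄ (fun w => P w i) w = _
    rw [dcongr _ _ (fun u _ => hs1val i u) w hw, hDer i a₄ 1 0 0 0 w hw, hs1val i w]; ring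
  have hs3val : ∀ i, ∀ w ∈ U,
      logDerivOpShift a₂ (logDerivOpShift a₃ (logDerivOpShift a₄ (fun w => P w i))) w
      = (a₂ * a₃ * a₄) * g i 0 w
        + (a₃ * a₄ + (1 + a₂) * (1 + a₃ + a₄)) * w * g i 1 w
        + (3 + a₂ + a₃ + a₄) * w ^ 2 * g i 2 w
        + 1 * w ^ 3 * g i 3 w + 0 * w ^ 4 * g i 4 w := by
    intro i w hw
    show w * deriv (logDerivOpShift a₃ (logDerivOpShift a₄ (fun w => P w i))) w
      + a₂ * logDerivOpShift a₃ (logDerivOpShift a₄ (fun w => P w i)) w = _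
    rw [dcongr _ _ (hs2val i) w hw, hDer i (a₃ * a₄) (1 + a₃ + a₄) 1 0 0 w hw,
      hs2val i w hw]; ring
  have hs4val : ∀ i, ∀ z ∈ U,
      logDerivOpShift a₁ (logDerivOpShift a₂ (logDerivOpShift a₃
        (logDerivOpShift a₄ (fun w => P w i)))) z
      = (a₁ * a₂ * a₃ * a₄) * g i 0 z
        + (a₂ * a₃ * a₄ + (1 + a₁) * (a₃ * a₄ + (1 + a₂) * (1 + a₃ + a₄))) * z * g i 1 z
        + ((a₃ * a₄ + (1 + a₂) * (1 + a₃ + a₄)) + (2 + a₁) * (3 + a₂ + a₃ + a₄)) * z ^ 2 * g i 2 z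
        + (6 + a₁ + a₂ + a₃ + a₄) * z ^ 3 * g i 3 z + z ^ 4 * g i 4 z := by
    intro i z hz
    show z * deriv (logDerivOpShift a₂ (logDerivOpShift a₃
        (logDerivOpShift a₄ (fun w => P w i)))) z
      + a₁ * logDerivOpShift a₂ (logDerivOpShift a₃
        (logDerivOpShift a₄ (fun w => P w i))) z = _
    rw [dcongr _ _ (hs3val i) z hz,
      hDer i (a₂ * a₃ * a₄) (a₃ * a₄ + (1 + a₂) * (1 + a₃ + a₄)) (3 + a₂ + a₃ + a₄) 1 0 z hz,
      hs3val i z hz]; ring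
  -- the ODE in ordinary-derivative form
  have hODE' : ∀ i, ∀ z ∈ U,
      z * g i 1 z + 7 * z ^ 2 * g i 2 z + 6 * z ^ 3 * g i 3 z + z ^ 4 * g i 4 z
      = μ⁻¹ * z * ((a₁ * a₂ * a₃ * a₄) * g i 0 z
        + (a₂ * a₃ * a₄ + (1 + a₁) * (a₃ * a₄ + (1 + a₂) * (1 + a₃ + a₄))) * z * g i 1 z
        + ((a₃ * a₄ + (1 + a₂) * (1 + a₃ + a₄)) + (2 + a₁) * (3 + a₂ + a₃ + a₄)) * z ^ 2 * g i 2 z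
        + (6 + a₁ + a₂ + a₃ + a₄) * z ^ 3 * g i 3 z + z ^ 4 * g i 4 z) := by
    intro i z hz
    have h := hODE i z hz
    rw [hθ4val i z hz, hs4val i z hz] at h
    linear_combination h
  -- the pairing functions
  set B : ℕ → ℕ → ℂ → ℂ :=
    fun m n z => ∑ i : Fin 4, ∑ j : Fin 4, g i m z * S i j * g j n z with hB
  have hSanti : ∀ i j, S j i = -S i j := by
    intro i j
    have := congrFun (congrFun hS i) j
    simpa [Matrix.transpose_apply, Matrix.neg_apply] using this
  have hBanti : ∀ m z, B m m z = 0 := by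
    intro m z
    have h : B m m z = -B m m z := by
      calc B m m z = ∑ j : Fin 4, ∑ i : Fin 4, g i m z * S i j * g j m z := Finset.sum_comm
        _ = ∑ j : Fin 4, ∑ i : Fin 4, -(g j m z * S j i * g i m z) := by
            refine Finset.sum_congr rfl fun j _ => Finset.sum_congr rfl fun i _ => ?_
            rw [hSanti j i]; ring
        _ = -B m m z := by
            rw [hB]; simp [Finset.sum_neg_distrib]
    linear_combination h / 2
  have hPair' : ∀ k : ℕ, k ≤ 2 → ∀ z ∈ U, B 0 k z = 0 := by
    intro k hk z hz
    have h := hPair k hk z hz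
    rw [hB]
    rw [← h]
    refine Finset.sum_congr rfl fun i _ => Finset.sum_congr rfl fun j _ => ?_
    have h0 : g i 0 z = P z i := by simp [hg]
    have hk' : g j k z = iteratedDeriv k (fun w => P w j) z := by
      simp [hg, iteratedDeriv_eq_iterate]
    rw [h0, hk']
  have hBD : ∀ m n, ∀ z ∈ U, HasDerivAt (B m n) (B (m + 1) n z + B m (n + 1) z) z := by
    intro m n z hz
    have H : HasDerivAt (fun w => ∑ i : Fin 4, ∑ j : Fin 4, g i m w * S i j * g j n w)
        (∑ i : Fin 4, ∑ j : Fin 4,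
          (g i (m + 1) z * S i j * g j n z + g i m z * S i j * g j (n + 1) z)) z := by
      refine HasDerivAt.fun_sum fun i _ => ?_
      refine HasDerivAt.fun_sum fun j _ => ?_
      exact ((hHD i m z hz).mul_const (S i j)).mul (hHD j n z hz)
    have he : (∑ i : Fin 4, ∑ j : Fin 4,
        (g i (m + 1) z * S i j * g j n z + g i m z * S i j * g j (n + 1) z))
        = B (m + 1) n z + B m (n + 1) z := by
      rw [hB]; simp [Finset.sum_add_distrib]
    rw [← he]
    exact H
  have h12 : ∀ z ∈ U, B 1 2 z = -B 0 3 z := by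
    intro z hz
    have hd0 : deriv (B 0 2) z = 0 := by
      rw [dcongr (B 0 2) (fun _ => 0) (fun w hw => hPair' 2 le_rfl w hw) z hz, deriv_const]
    have h := (hBD 0 2 z hz).deriv
    norm_num at h
    linear_combination h.symm.trans hd0
  have h13 : ∀ z ∈ U, 2 * B 1 3 z = -B 0 4 z := by
    intro z hz
    have hA1 : deriv (B 1 2) z = B 2 2 z + B 1 3 z := by
      have h := (hBD 1 2 z hz).deriv
      norm_num at h
      exact h
    have hA2 : deriv (B 1 2) z = -(B 1 3 z + B 0 4 z) := by
      rw [dcongr (B 1 2) (fun w => -B 0 3 w) (fun w hw => h12 w hw) z hz]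
      have h := ((hBD 0 3 z hz).neg).deriv
      exact h
    have h22 := hBanti 2 z
    linear_combination hA2 - hA1 - h22
  have hkey : ∀ z ∈ U,
      6 * z ^ 3 * B 0 3 z + z ^ 4 * B 0 4 z
      = μ⁻¹ * z * (8 * z ^ 3 * B 0 3 z + z ^ 4 * B 0 4 z) := by
    intro z hz
    have combo : ∀ c1 c2 c3 c4 c5 : ℂ,
        c1 * B 0 0 z + c2 * B 0 1 z + c3 * B 0 2 z + c4 * B 0 3 z + c5 * B 0 4 z
        = ∑ i : Fin 4, ∑ j : Fin 4, g i 0 z * S i j *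
            (c1 * g j 0 z + c2 * g j 1 z + c3 * g j 2 z + c4 * g j 3 z + c5 * g j 4 z) := by
      intro c1 c2 c3 c4 c5
      rw [hB]
      simp only [Finset.mul_sum, ← Finset.sum_add_distrib]
      exact Finset.sum_congr rfl fun i _ => Finset.sum_congr rfl fun j _ => by ring
    have hODEsum :
        (∑ i : Fin 4, ∑ j : Fin 4, g i 0 z * S i j *
          (0 * g j 0 z + z * g j 1 z + (7 * z ^ 2) * g j 2 z + (6 * z ^ 3) * g j 3 z
            + (z ^ 4) * g j 4 z))
        = (∑ i : Fin 4, ∑ j : Fin 4, g i 0 z * S i j *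
          ((μ⁻¹ * z * (a₁ * a₂ * a₃ * a₄)) * g j 0 z
            + (μ⁻¹ * z ^ 2 * (a₂ * a₃ * a₄ + (1 + a₁) * (a₃ * a₄ + (1 + a₂) * (1 + a₃ + a₄))))
                * g j 1 z
            + (μ⁻¹ * z ^ 3 * ((a₃ * a₄ + (1 + a₂) * (1 + a₃ + a₄))
                + (2 + a₁) * (3 + a₂ + a₃ + a₄))) * g j 2 z
            + (μ⁻¹ * z ^ 4 * (6 + a₁ + a₂ + a₃ + a₄)) * g j 3 z
            + (μ⁻¹ * z ^ 5) * g j 4 z)) := by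
      refine Finset.sum_congr rfl fun i _ => Finset.sum_congr rfl fun j _ => ?_
      have h := hODE' j z hz
      linear_combination (g i 0 z * S i j) * h
    have e1 := combo 0 z (7 * z ^ 2) (6 * z ^ 3) (z ^ 4)
    have e2 := combo (μ⁻¹ * z * (a₁ * a₂ * a₃ * a₄))
      (μ⁻¹ * z ^ 2 * (a₂ * a₃ * a₄ + (1 + a₁) * (a₃ * a₄ + (1 + a₂) * (1 + a₃ + a₄))))
      (μ⁻¹ * z ^ 3 * ((a₃ * a₄ + (1 + a₂) * (1 + a₃ + a₄)) + (2 + a₁) * (3 + a₂ + a₃ + a₄)))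
      (μ⁻¹ * z ^ 4 * (6 + a₁ + a₂ + a₃ + a₄))
      (μ⁻¹ * z ^ 5)
    have big := e1.trans (hODEsum.trans e2.symm)
    have h00 := hPair' 0 (by norm_num) z hz
    have h01 := hPair' 1 (by norm_num) z hz
    have h02 := hPair' 2 (by norm_num) z hz
    linear_combination big + (μ⁻¹ * z * (a₁ * a₂ * a₃ * a₄)) * h00
      + (μ⁻¹ * z ^ 2 * (a₂ * a₃ * a₄ + (1 + a₁) * (a₃ * a₄ + (1 + a₂) * (1 + a₃ + a₄))) - z) * h01
      + (μ⁻¹ * z ^ 3 * ((a₃ * a₄ + (1 + a₂) * (1 + a₃ + a₄))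
          + (2 + a₁) * (3 + a₂ + a₃ + a₄)) - 7 * z ^ 2) * h02
      + (μ⁻¹ * z ^ 4 * (B 0 3 z)) * hsum
  -- the Yukawa function and its derivative
  set Gf : ℂ → ℂ := fun z => z ^ 3 * (1 - z / μ) * B 0 3 z with hGf
  have hGD : ∀ z ∈ U, HasDerivAt Gf 0 z := by
    intro z hz
    have hz0 : z ≠ 0 := fun h => hU0 (h ▸ hz)
    have hsub : HasDerivAt (fun w : ℂ => 1 - w / μ) (0 - 1 / μ) z :=
      (hasDerivAt_const z (1 : ℂ)).sub ((hasDerivAt_id z).div_const μ)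
    have hpd := (hasDerivAt_pow 3 z).mul hsub
    have hY := hBD 0 3 z hz
    norm_num at hY
    have H := hpd.mul hY
    have hDzero : ((3 : ℂ) * z ^ 2 * (1 - z / μ) + z ^ 3 * (0 - 1 / μ)) * B 0 3 z
        + z ^ 3 * (1 - z / μ) * (B 1 3 z + B 0 4 z) = 0 := by
      have h2z : (2 * z) * (((3 : ℂ) * z ^ 2 * (1 - z / μ) + z ^ 3 * (0 - 1 / μ)) * B 0 3 z
          + z ^ 3 * (1 - z / μ) * (B 1 3 z + B 0 4 z)) = 0 := by
        have hk := hkey z hz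
        have h13z := h13 z hz
        have hμinv : 1 / μ = μ⁻¹ := one_div μ
        rw [hμinv]
        linear_combination hk + (z ^ 4 * (1 - z * μ⁻¹)) * h13z
      have := mul_eq_zero.mp h2z
      rcases this with h | h
      · exact absurd h (by simpa using hz0)
      · exact h
    have H' : HasDerivAt Gf (((3 : ℂ) * z ^ 2 * (1 - z / μ) + z ^ 3 * (0 - 1 / μ)) * B 0 3 z
        + z ^ 3 * (1 - z / μ) * (B 1 3 z + B 0 4 z)) z := by
      refine H.congr_deriv ?_
      show (((3 : ℕ) : ℂ) * z ^ (3 - 1) * (1 - z / μ) + z ^ 3 * (0 - 1 / μ)) * B 0 3 z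
        + z ^ 3 * (1 - z / μ) * (B 1 3 z + B 0 4 z) = _
      norm_num
    exact hDzero ▸ H'
  -- constancy on the connected set
  obtain ⟨z₀, hz₀⟩ := hUconn.nonempty
  have hGdiff : DifferentiableOn ℂ Gf U := fun z hz =>
    ((hGD z hz).differentiableAt).differentiableWithinAt
  have hGanal : AnalyticOnNhd ℂ Gf U := hGdiff.analyticOnNhd hUopen
  obtain ⟨r, hr0, hball⟩ := Metric.isOpen_iff.mp hUopen z₀ hz₀
  have hconst : ∀ w ∈ Metric.ball z₀ r, Gf w = Gf z₀ := by
    intro w hw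
    refine (convex_ball z₀ r).is_const_of_fderivWithin_eq_zero
      (fun x hx => ((hGD x (hball hx)).differentiableAt).differentiableWithinAt)
      (fun x hx => ?_) hw (Metric.mem_ball_self hr0)
    have hfd : HasFDerivAt Gf (0 : ℂ →L[ℂ] ℂ) x := by
      have h := (hGD x (hball hx)).hasFDerivAt
      have e : (ContinuousLinearMap.smulRight (1 : ℂ →L[ℂ] ℂ) (0 : ℂ)) = 0 := by
        ext
        simp
      simpa using h
    exact hfd.hasFDerivWithinAt.fderivWithin (Metric.isOpen_ball.uniqueDiffWithinAt hx)
  have hloc : Gf =ᶠ[nhds z₀] fun _ => Gf z₀ :=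
    Filter.eventuallyEq_of_mem (Metric.ball_mem_nhds z₀ hr0) hconst
  have heqU : Set.EqOn Gf (fun _ => Gf z₀) U :=
    hGanal.eqOn_of_preconnected_of_eventuallyEq analyticOnNhd_const
      hUconn.isPreconnected hz₀ hloc
  refine ⟨Gf z₀, fun z hz => ?_⟩
  have hsum3 : (∑ i, ∑ j, P z i * S i j * iteratedDeriv 3 (fun w => P w j) z) = B 0 3 z := by
    rw [hB]
    refine Finset.sum_congr rfl fun i _ => Finset.sum_congr rfl fun j _ => ?_
    have h0 : g i 0 z = P z i := by simp [hg]
    have h3 : g j 3 z = iteratedDeriv 3 (fun w => P w j) z := by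
      simp [hg, iteratedDeriv_eq_iterate]
    rw [h0, h3]
  rw [hsum3]
  exact heqU hz
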